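/- Let M be a nonzero symmetric n×n integer matrix, and let P be an integer such that (P : ℝ) equals the product of the distinct non-zero real eigenvalues of M (i.e., there is a finite set S ⊆ ℝ equal to the set of non-zero eigenvalues of the real matrix obtained from M, and P = ∏_{θ ∈ S} θ). Then for every x : Fin n → ℤ whose class in the cokernel (Fin n → ℤ)/(ℤ-row span of M) has finite additive order, the vector P • x lies in the ℤ-row span of M. -/

import Mathlib

open Finset Polynomial Matrix

namespace Stmt12Aux

lemma mapMatrix_inj {m : ℕ} {R S : Type*} [NonAssocSemiring R] [NonAssocSemiring S]
    {f : R →+* S} (hf : Function.Injective f) :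
    Function.Injective ((f.mapMatrix : Matrix (Fin m) (Fin m) R →+* Matrix (Fin m) (Fin m) S)) := by
  intro X Y h
  ext i j
  exact hf (by simpa [Matrix.map_apply] using congrFun (congrFun h i) j)

lemma pow_mulVec {m : ℕ} {R : Type*} [CommRing R] (A : Matrix (Fin m) (Fin m) R)
    (v : Fin m → R) (θ : R) (hv : A *ᵥ v = θ • v) (k : ℕ) :
    (A ^ k) *ᵥ v = θ ^ k • v := by
  induction k with
  | zero => simp [Matrix.one_mulVec]
  | succ k ih =>
      rw [pow_succ, ← Matrix.mulVec_mulVec, hv, Matrix.mulVec_smul, ih, smul_smul, pow_succ,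
        mul_comm]

lemma aeval_mulVec {m : ℕ} {R : Type*} [CommRing R] (A : Matrix (Fin m) (Fin m) R)
    (v : Fin m → R) (θ : R) (hv : A *ᵥ v = θ • v) (p : R[X]) :
    (aeval A p) *ᵥ v = p.eval θ • v := by
  induction p using Polynomial.induction_on' with
  | add p q hp hq => rw [map_add, Matrix.add_mulVec, hp, hq, eval_add, add_smul]
  | monomial k a =>
      rw [aeval_monomial, eval_monomial, ← Matrix.mulVec_mulVec,
        pow_mulVec A v θ hv k, Algebra.algebraMap_eq_smul_one, Matrix.smul_mulVec,
        Matrix.one_mulVec, smul_smul]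

lemma aeval_diagonal {m : ℕ} (w : Fin m → ℝ) (q : ℝ[X]) :
    aeval (Matrix.diagonal w) q = Matrix.diagonal (fun i => q.eval (w i)) := by
  let f : (Fin m → ℝ) →ₐ[ℝ] Matrix (Fin m) (Fin m) ℝ := Matrix.diagonalAlgHom ℝ
  have h1 : Matrix.diagonal w = f w := rfl
  rw [h1, Polynomial.aeval_algHom_apply]
  have h2 : aeval w q = fun i => q.eval (w i) := by
    funext i
    rw [Polynomial.aeval_fn_apply, Polynomial.aeval_def, Algebra.algebraMap_self]
    rfl
  rw [h2]
  rfl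

lemma aeval_eq_zero_of_eigen {m : ℕ} {A : Matrix (Fin m) (Fin m) ℝ} (hA : A.IsHermitian)
    (q : ℝ[X]) (hq : ∀ i, q.eval (hA.eigenvalues i) = 0) :
    aeval A q = 0 := by
  classical
  set V : Matrix (Fin m) (Fin m) ℝ := (hA.eigenvectorUnitary : Matrix (Fin m) (Fin m) ℝ) with hV
  have h1 : V * star V = 1 := Unitary.mul_star_self_of_mem hA.eigenvectorUnitary.2
  have h2 : star V * V = 1 := Unitary.star_mul_self_of_mem hA.eigenvectorUnitary.2
  have h2' : ∀ X : Matrix (Fin m) (Fin m) ℝ, star V * (V * X) = X := fun X => by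
    rw [← Matrix.mul_assoc, h2, one_mul]
  let ψ : Matrix (Fin m) (Fin m) ℝ →ₐ[ℝ] Matrix (Fin m) (Fin m) ℝ :=
  { toFun := fun N => V * N * star V
    map_one' := by show V * 1 * star V = 1; rw [mul_one, h1]
    map_mul' := fun a b => by
      show V * (a * b) * star V = (V * a * star V) * (V * b * star V)
      simp only [Matrix.mul_assoc]
      rw [h2']
    map_zero' := by show V * 0 * star V = 0; rw [mul_zero, zero_mul]
    map_add' := fun a b => by
      show V * (a + b) * star V = V * a * star V + V * b * star V
      rw [mul_add, add_mul]
    commutes' := fun r => by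
      show V * (algebraMap ℝ _ r) * star V = algebraMap ℝ _ r
      rw [Algebra.algebraMap_eq_smul_one, Matrix.mul_smul, mul_one, Matrix.smul_mul, h1] }
  have hψD : ψ (Matrix.diagonal hA.eigenvalues) = A := by
    have h3 := hA.spectral_theorem
    rw [RCLike.ofReal_real_eq_id] at h3
    have h4 : ψ (Matrix.diagonal hA.eigenvalues) = V * Matrix.diagonal hA.eigenvalues * star V :=
      rfl
    rw [h4]
    exact h3.symm
  have hD : aeval (Matrix.diagonal hA.eigenvalues) q = 0 := by
    rw [aeval_diagonal]
    have h4 : (fun i => q.eval (hA.eigenvalues i)) = fun _ => (0:ℝ) := funext hq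
    rw [h4, Matrix.diagonal_zero]
  rw [← hψD, Polynomial.aeval_algHom_apply, hD, map_zero]

lemma span_descend {m : ℕ} {ι : Type*} (v : ι → Matrix (Fin m) (Fin m) ℚ)
    (x : Matrix (Fin m) (Fin m) ℚ)
    (h : x.map (fun q : ℚ => (q : ℝ)) ∈
      Submodule.span ℝ (Set.range fun i => (v i).map (fun q : ℚ => (q : ℝ)))) :
    x ∈ Submodule.span ℚ (Set.range v) := by
  classical
  by_contra hx
  obtain ⟨g, hgx, hgW⟩ := Submodule.exists_dual_map_eq_bot_of_notMem hx inferInstance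
  have hW : ∀ w ∈ Submodule.span ℚ (Set.range v), g w = 0 := by
    intro w hw
    have : g w ∈ Submodule.map g (Submodule.span ℚ (Set.range v)) :=
      Submodule.mem_map_of_mem hw
    rw [hgW] at this
    exact (Submodule.mem_bot ℚ).mp this
  set C0 : Matrix (Fin m) (Fin m) ℝ :=
    Matrix.of (fun i j => ((g (Matrix.single i j 1) : ℚ) : ℝ)) with hC0
  let gr : Matrix (Fin m) (Fin m) ℝ →ₗ[ℝ] ℝ :=
  { toFun := fun N => ∑ i, ∑ j, C0 i j * N i j
    map_add' := fun a b => by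
      simp [Matrix.add_apply, mul_add, Finset.sum_add_distrib]
    map_smul' := fun r a => by
      simp only [Matrix.smul_apply, smul_eq_mul, RingHom.id_apply, Finset.mul_sum]
      congr 1; funext i; congr 1; funext j; ring }
  have key : ∀ Q : Matrix (Fin m) (Fin m) ℚ,
      gr (Q.map (fun q : ℚ => (q : ℝ))) = ((g Q : ℚ) : ℝ) := by
    intro Q
    have hQ : Q = ∑ i, ∑ j, (Q i j) • Matrix.single i j (1 : ℚ) := by
      conv_lhs => rw [Matrix.matrix_eq_sum_single Q]
      congr 1; funext i; congr 1; funext j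
      rw [Matrix.smul_single, smul_eq_mul, mul_one]
    have hgQ : g Q = ∑ i, ∑ j, Q i j * g (Matrix.single i j 1) := by
      conv_lhs => rw [hQ]
      rw [map_sum]
      congr 1; funext i
      rw [map_sum]
      congr 1; funext j
      rw [_root_.map_smul, smul_eq_mul]
    have h5 : gr (Q.map (fun q : ℚ => (q : ℝ))) = ∑ i, ∑ j, C0 i j * (Q i j : ℝ) := rfl
    rw [h5, hgQ]
    push_cast
    congr 1; funext i; congr 1; funext j
    rw [hC0]
    simp [mul_comm]
  have hker : Submodule.span ℝ (Set.range fun i => (v i).map (fun q : ℚ => (q : ℝ)))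
      ≤ LinearMap.ker gr := by
    rw [Submodule.span_le]
    rintro _ ⟨i, rfl⟩
    simp only [SetLike.mem_coe, LinearMap.mem_ker]
    rw [key (v i), hW (v i) (Submodule.subset_span (Set.mem_range_self i))]
    norm_num
  have h6 := hker h
  rw [LinearMap.mem_ker, key x] at h6
  exact hgx (by exact_mod_cast h6)

end Stmt12Aux

open Stmt12Aux

/-- The ℤ-span of the rows of an integer matrix, as an additive subgroup of `V → ℤ`. -/
def rowSpan {V : Type*} [Fintype V] (L : Matrix V V ℤ) : AddSubgroup (V → ℤ) :=
  (Submodule.span ℤ (Set.range fun w => L w)).toAddSubgroup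

theorem stmt12 (n : ℕ) (M : Matrix (Fin n) (Fin n) ℤ) (hM0 : M ≠ 0)
    (hsymm : M.IsSymm)
    (S : Finset ℝ)
    (hS : ∀ θ : ℝ, θ ∈ S ↔ θ ≠ 0 ∧
      Module.End.HasEigenvalue
        (Matrix.toLin' (M.map (Int.cast : ℤ → ℝ))) θ)
    (P : ℤ) (hP : (P : ℝ) = ∏ θ ∈ S, θ)
    (x : Fin n → ℤ)
    (hx : IsOfFinAddOrder ((QuotientAddGroup.mk x) : (Fin n → ℤ) ⧸ rowSpan M)) :
    P • x ∈ rowSpan M := by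
  classical
  have hn : 0 < n := by
    rcases Nat.eq_zero_or_pos n with h | h
    · exfalso; apply hM0; subst h; exact Subsingleton.elim M 0
    · exact h
  haveI : Nonempty (Fin n) := ⟨⟨0, hn⟩⟩
  set A : Matrix (Fin n) (Fin n) ℝ := M.map (Int.cast : ℤ → ℝ) with hAdef
  set Mq : Matrix (Fin n) (Fin n) ℚ := M.map (Int.cast : ℤ → ℚ) with hMqdef
  have hA : A.IsHermitian := by
    ext i j
    simp only [Matrix.conjTranspose_apply, star_trivial, hAdef, Matrix.map_apply]
    exact congrArg _ (hsymm.apply i j)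
  -- eigenvalues
  set d : Fin n → ℝ := hA.eigenvalues with hd
  have heig : ∀ j, Module.End.HasEigenvalue (Matrix.toLin' A) (d j) := by
    intro j
    refine Module.End.hasEigenvalue_of_hasEigenvector
      (x := ⇑(hA.eigenvectorBasis j)) ⟨?_, by simpa using hA.eigenvectorBasis.orthonormal.ne_zero j⟩
    rw [Module.End.mem_eigenspace_iff, Matrix.toLin'_apply]
    exact hA.mulVec_eigenvectorBasis j
  have hd_mem : ∀ j, d j = 0 ∨ d j ∈ S := by
    intro j
    by_cases h : d j = 0
    · exact Or.inl h
    · exact Or.inr ((hS (d j)).2 ⟨h, heig j⟩)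
  -- minimal polynomial of A over ℝ
  have hAint : IsIntegral ℝ A := IsIntegral.of_finite ℝ A
  set p : ℝ[X] := minpoly ℝ A with hpdef
  have hp_monic : p.Monic := minpoly.monic hAint
  have hp_ne : p ≠ 0 := hp_monic.ne_zero
  have hminAeq : minpoly ℝ (Matrix.toLin' A) = p := by
    have h :=
      minpoly.algEquiv_eq
        (Matrix.toLinAlgEquiv' : Matrix (Fin n) (Fin n) ℝ ≃ₐ[ℝ] _) A
    exact h
  have hroot_iff : ∀ θ : ℝ, Module.End.HasEigenvalue (Matrix.toLin' A) θ ↔ p.IsRoot θ := by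
    intro θ
    rw [← hminAeq]
    exact Module.End.hasEigenvalue_iff_isRoot
  -- r0 kills A
  set T0 : Finset ℝ := Finset.image d Finset.univ with hT0
  set r0 : ℝ[X] := ∏ t ∈ T0, (X - C t) with hr0
  have hr0sep : r0.Separable := by
    rw [hr0]
    exact Polynomial.separable_prod_X_sub_C_iff'.mpr
      (fun a _ b _ h => h)
  have hr0zero : aeval A r0 = 0 := by
    apply aeval_eq_zero_of_eigen hA
    intro i
    rw [hr0, eval_prod]
    apply Finset.prod_eq_zero (Finset.mem_image_of_mem d (Finset.mem_univ i))
    simp [hd]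
  have hpr0 : p ∣ r0 := minpoly.dvd ℝ A hr0zero
  have hp_sq : Squarefree p := (hr0sep.squarefree).squarefree_of_dvd hpr0
  have hp_sep : p.Separable := PerfectField.separable_iff_squarefree.mpr hp_sq
  have hp_splits : p.Splits := by
    apply Polynomial.Splits.of_dvd ?_ ?_ hpr0
    swap
    · rw [hr0]
      exact (Finset.prod_ne_zero_iff).mpr (fun t _ => Polynomial.X_sub_C_ne_zero t)
    · rw [hr0]
      exact Polynomial.Splits.prod (fun t _ => Polynomial.Splits.X_sub_C _)
  -- roots of p
  set T : Finset ℝ := p.roots.toFinset with hT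
  have hST : S ⊆ T := by
    intro θ hθ
    rw [hT, Multiset.mem_toFinset, Polynomial.mem_roots hp_ne]
    exact ((hroot_iff θ).1 ((hS θ).1 hθ).2)
  have hT0S : T ⊆ insert 0 S := by
    intro θ hθ
    rw [hT, Multiset.mem_toFinset, Polynomial.mem_roots hp_ne] at hθ
    have heigθ : Module.End.HasEigenvalue (Matrix.toLin' A) θ := (hroot_iff θ).2 hθ
    by_cases h : θ = 0
    · exact Finset.mem_insert.mpr (Or.inl h)
    · exact Finset.mem_insert.mpr (Or.inr ((hS θ).2 ⟨h, heigθ⟩))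
  have hprodT : p = ∏ θ ∈ T, (X - C θ) := by
    have h1 := hp_splits.eq_prod_roots_of_monic hp_monic
    have h2 : p.roots.Nodup := Polynomial.nodup_roots hp_sep
    rw [hT]
    rw [Finset.prod_eq_multiset_prod]
    rw [Multiset.toFinset_val, Multiset.dedup_eq_self.mpr h2]
    exact h1
  -- rational minimal polynomial
  have hMqint : IsIntegral ℚ Mq := IsIntegral.of_finite ℚ Mq
  set mq : ℚ[X] := minpoly ℚ Mq with hmqdef
  have hmq_monic : mq.Monic := minpoly.monic hMqint
  have hzq : aeval Mq mq = 0 := minpoly.aeval ℚ Mq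
  set dp : ℕ := p.natDegree with hdp
  have hdp_pos : 0 < dp := minpoly.natDegree_pos hAint
  -- powers of A lie in castings of powers of Mq
  have hMqA : ∀ k : ℕ, (Mq ^ k).map (fun q : ℚ => (q : ℝ)) = A ^ k := by
    intro k
    have h1 : ((Rat.castHom ℝ).mapMatrix : Matrix (Fin n) (Fin n) ℚ →+* Matrix (Fin n) (Fin n) ℝ)
        Mq = A := by
      ext i j
      simp [Matrix.map_apply, hMqdef, hAdef]
    calc (Mq ^ k).map (fun q : ℚ => (q : ℝ))
        = ((Rat.castHom ℝ).mapMatrix : Matrix (Fin n) (Fin n) ℚ →+* _) (Mq ^ k) := rfl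
      _ = (((Rat.castHom ℝ).mapMatrix : Matrix (Fin n) (Fin n) ℚ →+* _) Mq) ^ k := by
          rw [map_pow]
      _ = A ^ k := by rw [h1]
  -- the degree of mq is at most dp
  have hApow : A ^ dp ∈ Submodule.span ℝ (Set.range fun i : Fin dp => A ^ (i : ℕ)) := by
    set q : ℝ[X] := X ^ dp - p with hqdef
    have haq : A ^ dp = aeval A q := by
      rw [hqdef, map_sub, map_pow, aeval_X, minpoly.aeval, sub_zero]
    rcases eq_or_ne q 0 with h0 | h0
    · rw [haq, h0, map_zero]; exact Submodule.zero_mem _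
    · have hdeg : q.natDegree < dp := by
        have hle : q.natDegree ≤ dp := by
          refine le_trans (Polynomial.natDegree_sub_le _ _) ?_
          simp [Polynomial.natDegree_X_pow, hdp]
        rcases lt_or_eq_of_le hle with h | h
        · exact h
        · exfalso
          have hc : q.coeff dp = 0 := by
            rw [hqdef]
            simp [Polynomial.coeff_X_pow, hdp, hp_monic.coeff_natDegree]
          have h2 := Polynomial.leadingCoeff_ne_zero.mpr h0
          rw [Polynomial.leadingCoeff, h, hc] at h2
          exact h2 rfl
      rw [haq, Polynomial.aeval_eq_sum_range' hdeg]
      apply Submodule.sum_mem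
      intro i hi
      apply Submodule.smul_mem
      exact Submodule.subset_span ⟨⟨i, Finset.mem_range.mp hi⟩, rfl⟩
  have hdesc : Mq ^ dp ∈ Submodule.span ℚ (Set.range fun i : Fin dp => Mq ^ (i : ℕ)) := by
    apply span_descend
    have hfun : (fun i : Fin dp => (Mq ^ (i : ℕ)).map (fun q : ℚ => (q : ℝ)))
        = fun i : Fin dp => A ^ (i : ℕ) := funext fun i => hMqA _
    rw [hMqA dp, hfun]
    exact hApow
  obtain ⟨c, hc⟩ := (Submodule.mem_span_range_iff_exists_fun ℚ).mp hdesc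
  set q1 : ℚ[X] := X ^ dp - ∑ i : Fin dp, C (c i) * X ^ (i : ℕ) with hq1
  have hsumdeg : (∑ i : Fin dp, C (c i) * X ^ (i : ℕ) : ℚ[X]).degree < (dp : ℕ) := by
    refine lt_of_le_of_lt (Polynomial.degree_sum_le _ _) ?_
    rw [Finset.sup_lt_iff (by exact_mod_cast WithBot.bot_lt_coe dp)]
    intro i _
    refine lt_of_le_of_lt (Polynomial.degree_C_mul_X_pow_le _ _) ?_
    exact_mod_cast i.2
  have hq1monic : q1.Monic := Polynomial.monic_X_pow_sub hsumdeg
  have hq1aeval : aeval Mq q1 = 0 := by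
    rw [hq1, map_sub, map_pow, aeval_X, map_sum, sub_eq_zero]
    rw [← hc]
    congr 1
    funext i
    rw [_root_.map_mul, aeval_C, map_pow, aeval_X, Algebra.smul_def]
  have hdegle : mq.natDegree ≤ dp := by
    have h1 := minpoly.min (A := ℚ) (x := Mq) hq1monic hq1aeval
    have h2 : q1.degree ≤ (dp : ℕ) := by
      rw [hq1]
      refine le_trans (Polynomial.degree_sub_le _ _) ?_
      rw [Polynomial.degree_X_pow]
      exact max_le le_rfl (le_of_lt hsumdeg)
    have h3 : mq.degree ≤ (dp : ℕ) := le_trans h1 h2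
    exact Polynomial.natDegree_le_iff_degree_le.mpr h3
  -- Gauss: mq comes from an integer polynomial G
  have hinjQ : Function.Injective (algebraMap ℤ ℚ) := by
    rw [algebraMap_int_eq]; exact fun a b hab => Int.cast_injective hab
  have hchar : Mq.charpoly = (M.charpoly).map (Int.castRingHom ℚ) :=
    Matrix.charpoly_map M (Int.castRingHom ℚ)
  have hmq_dvd : mq ∣ (M.charpoly).map (algebraMap ℤ ℚ) := by
    rw [algebraMap_int_eq, ← hchar]
    exact Matrix.minpoly_dvd_charpoly Mq
  obtain ⟨G, hG⟩ := IsIntegrallyClosed.eq_map_mul_C_of_dvd (K := ℚ) (M.charpoly_monic) hmq_dvd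
  have hGmap : G.map (algebraMap ℤ ℚ) = mq := by
    rw [hmq_monic.leadingCoeff, Polynomial.C_1, mul_one] at hG
    exact hG
  have hGmonic : G.Monic := by
    apply Polynomial.monic_of_injective hinjQ
    rw [hGmap]
    exact hmq_monic
  -- G annihilates M
  have hzG : aeval M G = 0 := by
    apply mapMatrix_inj (f := Int.castRingHom ℚ) Int.cast_injective
    rw [map_zero]
    have h1 := Polynomial.aeval_algHom_apply
      ((Int.castRingHom ℚ).mapMatrix.toIntAlgHom :
        Matrix (Fin n) (Fin n) ℤ →ₐ[ℤ] Matrix (Fin n) (Fin n) ℚ) M G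
    have h2 : ((Int.castRingHom ℚ).mapMatrix.toIntAlgHom :
        Matrix (Fin n) (Fin n) ℤ →ₐ[ℤ] Matrix (Fin n) (Fin n) ℚ) M = Mq := rfl
    rw [h2] at h1
    have h3 : aeval Mq G = 0 := by
      have h4 : aeval Mq (G.map (algebraMap ℤ ℚ)) = 0 := by rw [hGmap]; exact hzq
      rwa [Polynomial.aeval_map_algebraMap] at h4
    exact h1.symm.trans h3
  -- G annihilates A, and p equals G over ℝ
  have hzA : aeval A G = 0 := by
    have h1 := Polynomial.aeval_algHom_apply
      ((Int.castRingHom ℝ).mapMatrix.toIntAlgHom :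
        Matrix (Fin n) (Fin n) ℤ →ₐ[ℤ] Matrix (Fin n) (Fin n) ℝ) M G
    have h2 : ((Int.castRingHom ℝ).mapMatrix.toIntAlgHom :
        Matrix (Fin n) (Fin n) ℤ →ₐ[ℤ] Matrix (Fin n) (Fin n) ℝ) M = A := rfl
    rw [h2, hzG, map_zero] at h1
    exact h1
  have hinjR : Function.Injective (algebraMap ℤ ℝ) := by
    rw [algebraMap_int_eq]; exact fun a b hab => Int.cast_injective hab
  have hpG : G.map (algebraMap ℤ ℝ) = p := by
    have hdvd : p ∣ G.map (algebraMap ℤ ℝ) := by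
      apply minpoly.dvd ℝ A
      rw [Polynomial.aeval_map_algebraMap]
      exact hzA
    refine Polynomial.eq_of_monic_of_dvd_of_natDegree_le hp_monic
      (hGmonic.map _) hdvd ?_
    rw [Polynomial.natDegree_map_eq_of_injective hinjR]
    have h5 : G.natDegree = mq.natDegree := by
      rw [← hGmap, Polynomial.natDegree_map_eq_of_injective hinjQ]
    rw [h5]
    exact hdegle
  -- the product over S and its constant coefficient
  set gS : ℝ[X] := ∏ θ ∈ S, (X - C θ) with hgS
  have hS0 : (0:ℝ) ∉ S := fun h => ((hS 0).1 h).1 rfl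
  have hgS0 : gS.coeff 0 = (-1) ^ S.card * (P : ℝ) := by
    rw [hgS, Polynomial.coeff_zero_eq_eval_zero, Polynomial.eval_prod, hP]
    simp only [Polynomial.eval_sub, Polynomial.eval_X, Polynomial.eval_C, zero_sub]
    have hcongr : ∀ θ ∈ S, -θ = -1 * θ := fun θ _ => (neg_one_mul θ).symm
    rw [Finset.prod_congr rfl hcongr, Finset.prod_mul_distrib, Finset.prod_const]
  -- build the integer polynomial H
  obtain ⟨H, hMH, hH0⟩ : ∃ H : ℤ[X], M * (aeval M H) = 0 ∧
      H.coeff 0 = (-1) ^ S.card * P := by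
    have hGcast : ∀ j : ℕ, ((G.coeff j : ℤ) : ℝ) = p.coeff j := by
      intro j
      rw [← hpG, Polynomial.coeff_map, algebraMap_int_eq]
      rfl
    by_cases h0T : (0:ℝ) ∈ T
    · have hTeq : T = insert 0 S := by
        apply Finset.Subset.antisymm hT0S
        intro θ hθ
        rcases Finset.mem_insert.mp hθ with h | h
        · rw [h]; exact h0T
        · exact hST h
      have hpX : p = X * gS := by
        rw [hprodT, hTeq, Finset.prod_insert hS0, C_0, sub_zero, hgS]
      have hGc0 : G.coeff 0 = 0 := by
        apply Int.cast_injective (α := ℝ)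
        rw [hGcast 0, hpX, Polynomial.mul_coeff_zero, Polynomial.coeff_X_zero, zero_mul,
          Int.cast_zero]
      refine ⟨G.divX, ?_, ?_⟩
      · have hXG : X * G.divX = G := by
          have h1 := Polynomial.X_mul_divX_add G
          rw [hGc0, C_0, add_zero] at h1
          exact h1
        calc M * aeval M G.divX = aeval M (X * G.divX) := by rw [_root_.map_mul, aeval_X]
          _ = 0 := by rw [hXG, hzG]
      · have h1 : ((G.divX.coeff 0 : ℤ) : ℝ) = gS.coeff 0 := by
          rw [Polynomial.coeff_divX, hGcast 1, hpX, Polynomial.coeff_X_mul]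
        rw [hgS0] at h1
        exact_mod_cast h1
    · have hTeq : T = S := by
        refine Finset.Subset.antisymm ?_ hST
        intro θ hθ
        rcases Finset.mem_insert.mp (hT0S hθ) with h | h
        · exact absurd (h ▸ hθ) h0T
        · exact h
      have hpX : p = gS := by rw [hprodT, hTeq, hgS]
      refine ⟨G, by rw [hzG, mul_zero], ?_⟩
      have h1 : ((G.coeff 0 : ℤ) : ℝ) = gS.coeff 0 := by rw [hGcast 0, hpX]
      rw [hgS0] at h1
      exact_mod_cast h1
  -- torsion: k • x lies in the row span
  have hspan : Submodule.span ℤ (Set.range fun w => M w) =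
      LinearMap.range (Matrix.mulVecLin M) := by
    have h := Matrix.range_mulVecLin M
    rw [h]
    conv_lhs => rw [← hsymm]
    rfl
  have hk_pos : 0 < addOrderOf ((QuotientAddGroup.mk x) : (Fin n → ℤ) ⧸ rowSpan M) :=
    hx.addOrderOf_pos
  set k : ℕ := addOrderOf ((QuotientAddGroup.mk x) : (Fin n → ℤ) ⧸ rowSpan M) with hk
  have hkx : k • x ∈ rowSpan M := by
    have h2 : (k • (QuotientAddGroup.mk x : (Fin n → ℤ) ⧸ rowSpan M)) = 0 :=
      addOrderOf_nsmul_eq_zero _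
    have h1 : ((QuotientAddGroup.mk (k • x)) : (Fin n → ℤ) ⧸ rowSpan M) = 0 := by
      calc (QuotientAddGroup.mk (k • x) : (Fin n → ℤ) ⧸ rowSpan M)
          = QuotientAddGroup.mk' (rowSpan M) (k • x) := rfl
        _ = k • QuotientAddGroup.mk' (rowSpan M) x := map_nsmul _ _ _
        _ = 0 := h2
    exact (QuotientAddGroup.eq_zero_iff _).mp h1
  obtain ⟨y, hy⟩ : ∃ y, M *ᵥ y = (k:ℤ) • x := by
    have h1 : k • x ∈ Submodule.span ℤ (Set.range fun w => M w) := hkx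
    rw [hspan] at h1
    obtain ⟨y, hy'⟩ := h1
    refine ⟨y, ?_⟩
    have h3 : M.mulVecLin y = k • x := hy'
    rw [Matrix.mulVecLin_apply] at h3
    rw [h3, natCast_zsmul]
  -- the matrix N := H(M) kills x
  set Nn : Matrix (Fin n) (Fin n) ℤ := aeval M H with hNdef
  set B : Matrix (Fin n) (Fin n) ℤ := aeval M H.divX with hBdef
  have hNM : Nn * M = M * Nn := by
    have h1 : Nn * M = aeval M (H * X) := by rw [_root_.map_mul, aeval_X]
    have h2 : M * Nn = aeval M (X * H) := by rw [_root_.map_mul, aeval_X]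
    rw [h1, h2, mul_comm X H]
  have hNx : Nn *ᵥ ((k:ℤ) • x) = 0 := by
    rw [← hy, Matrix.mulVec_mulVec, hNM, hMH, Matrix.zero_mulVec]
  have hNx0 : Nn *ᵥ x = 0 := by
    have h1 : (k:ℤ) • (Nn *ᵥ x) = 0 := by rw [← Matrix.mulVec_smul, hNx]
    have h2 : (k:ℤ) ≠ 0 := Int.natCast_ne_zero.mpr hk_pos.ne'
    rcases smul_eq_zero.mp h1 with h | h
    · exact absurd h h2
    · exact h
  have hdecomp : Nn = B * M + (H.coeff 0) • (1 : Matrix (Fin n) (Fin n) ℤ) := by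
    have h1 := Polynomial.divX_mul_X_add H
    conv_lhs => rw [hNdef, ← h1]
    rw [map_add, _root_.map_mul, aeval_X, aeval_C, Algebra.algebraMap_eq_smul_one, ← hBdef]
  have hBM : B * M = M * B := by
    have h1 : B * M = aeval M (H.divX * X) := by rw [_root_.map_mul, aeval_X]
    have h2 : M * B = aeval M (X * H.divX) := by rw [_root_.map_mul, aeval_X]
    rw [h1, h2, mul_comm]
  have hfinal : (H.coeff 0) • x = M *ᵥ (-(B *ᵥ x)) := by
    have h1 : (B * M + (H.coeff 0) • (1 : Matrix (Fin n) (Fin n) ℤ)) *ᵥ x = 0 := by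
      rw [← hdecomp]; exact hNx0
    rw [Matrix.add_mulVec, hBM] at h1
    have h2 : ((H.coeff 0) • (1 : Matrix (Fin n) (Fin n) ℤ)) *ᵥ x = (H.coeff 0) • x := by
      rw [Matrix.smul_mulVec, Matrix.one_mulVec]
    rw [h2] at h1
    have h3 : (M * B) *ᵥ x = M *ᵥ (B *ᵥ x) := (Matrix.mulVec_mulVec _ _ _).symm
    rw [h3] at h1
    rw [Matrix.mulVec_neg]
    exact eq_neg_of_add_eq_zero_right h1
  have hmem : (H.coeff 0) • x ∈ Submodule.span ℤ (Set.range fun w => M w) := by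
    rw [hspan]
    exact ⟨-(B *ᵥ x), hfinal.symm⟩
  have hPmem : P • x ∈ Submodule.span ℤ (Set.range fun w => M w) := by
    have h2 : ((-1:ℤ) ^ S.card) * ((-1:ℤ) ^ S.card) = 1 := by
      rw [← pow_add]
      exact Even.neg_one_pow ⟨S.card, rfl⟩
    have h1 : ((-1 : ℤ) ^ S.card) • ((H.coeff 0) • x) = P • x := by
      rw [smul_smul, hH0, ← mul_assoc, h2, one_mul]
    rw [← h1]
    exact Submodule.smul_mem _ _ hmem
  exact hPmem
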